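/- For every $x\in[0,1]$ and every integer $d\geq 3$, the regularized incomplete beta function satisfies $I_x\left(\tfrac{d-1}{2},\tfrac{1}{2}\right) \geq \frac{2}{\sqrt{\pi}(d-1)}\left(\frac{d}{2}-\frac{3}{4}\right)^{1/2} x^{(d-1)/2}$. -/

import Mathlib

open Real

-- midpoint log-convexity of Gamma
lemma gamma_sq_le (t : ℝ) (ht : 0 < t) :
    Gamma (t + 1) ^ 2 ≤ Gamma (t + 1/2) * Gamma (t + 3/2) := by
  have h1 : (0:ℝ) < t + 1/2 := by linarith
  have h2 : (0:ℝ) < t + 3/2 := by linarith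
  have hc := Real.convexOn_log_Gamma.2 (Set.mem_Ioi.2 h1) (Set.mem_Ioi.2 h2)
    (by norm_num : (0:ℝ) ≤ 1/2) (by norm_num : (0:ℝ) ≤ 1/2) (by norm_num)
  have hmid : (1/2:ℝ) • (t + 1/2) + (1/2:ℝ) • (t + 3/2) = t + 1 := by
    simp [smul_eq_mul]; ring
  rw [hmid] at hc
  simp only [Function.comp_apply, smul_eq_mul] at hc
  have hG1 : 0 < Gamma (t+1) := Gamma_pos_of_pos (by linarith)
  have hG2 : 0 < Gamma (t+1/2) := Gamma_pos_of_pos h1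
  have hG3 : 0 < Gamma (t+3/2) := Gamma_pos_of_pos h2
  have := Real.exp_le_exp.2 hc
  rw [Real.exp_log hG1] at this
  calc Gamma (t+1)^2 ≤ (Real.exp (1/2 * Real.log (Gamma (t+1/2)) + 1/2 * Real.log (Gamma (t+3/2))))^2 := by
        exact pow_le_pow_left₀ (le_of_lt hG1) this 2
    _ = Gamma (t + 1/2) * Gamma (t + 3/2) := by
        rw [← Real.exp_nat_mul]
        push_cast
        rw [show (2:ℝ) * (1/2 * Real.log (Gamma (t+1/2)) + 1/2 * Real.log (Gamma (t+3/2)))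
            = Real.log (Gamma (t+1/2)) + Real.log (Gamma (t+3/2)) by ring,
          Real.exp_add, Real.exp_log hG2, Real.exp_log hG3]

-- Wendel's inequality
lemma wendel (t : ℝ) (ht : 0 < t) :
    t^2 * Gamma t ^ 2 ≤ (t + 1/2) * Gamma (t + 1/2) ^ 2 := by
  have h1 : (0:ℝ) < t + 1/2 := by linarith
  have e1 : Gamma (t+1) = t * Gamma t := Real.Gamma_add_one (ne_of_gt ht)
  have e2 : Gamma (t+3/2) = (t+1/2) * Gamma (t+1/2) := by
    have := Real.Gamma_add_one (ne_of_gt h1)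
    rw [show t + 1/2 + 1 = t + 3/2 by ring] at this
    exact this
  have := gamma_sq_le t ht
  rw [e1, e2] at this
  nlinarith [this]

noncomputable def rr (t : ℝ) : ℝ := Gamma (t + 1/2) ^ 2 / ((t - 1/4) * Gamma t ^ 2)

lemma rr_mono (t : ℝ) (ht : 1 ≤ t) : rr (t + 1) ≤ rr t := by
  have h0 : (0:ℝ) < t := by linarith
  have h1 : (0:ℝ) < t + 1/2 := by linarith
  have hG0 : 0 < Gamma t := Gamma_pos_of_pos h0
  have hG1 : 0 < Gamma (t + 1/2) := Gamma_pos_of_pos h1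
  have e1 : Gamma (t+1) = t * Gamma t := Real.Gamma_add_one (ne_of_gt h0)
  have e2 : Gamma (t+1+1/2) = (t+1/2) * Gamma (t+1/2) := by
    have := Real.Gamma_add_one (ne_of_gt h1)
    rw [show t + 1/2 + 1 = t + 1 + 1/2 by ring] at this
    exact this
  rw [rr, rr, e1, e2, div_le_div_iff₀ (mul_pos (by linarith) (by positivity)) (mul_pos (by linarith) (by positivity))]
  nlinarith [sq_nonneg (Gamma t * Gamma (t+1/2)), sq_nonneg (Gamma (t+1/2)), hG0, hG1]

lemma rr_chain (s : ℝ) (hs : 1 ≤ s) : ∀ n : ℕ, rr (s + n) ≤ rr s := by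
  intro n
  induction n with
  | zero => simp
  | succ k ih =>
      have hk : (0:ℝ) ≤ (k:ℝ) := Nat.cast_nonneg k
      have h1 : rr (s + k + 1) ≤ rr (s + k) := rr_mono _ (by linarith)
      have e : (↑(k+1):ℝ) = (k:ℝ) + 1 := by push_cast; ring
      rw [e, ← add_assoc]
      exact h1.trans ih

lemma rr_lower (t : ℝ) (ht : 1 ≤ t) : 1 - 1/t ≤ rr t := by
  have h0 : (0:ℝ) < t := by linarith
  have h1 : (0:ℝ) < t + 1/2 := by linarith
  have hG0 : 0 < Gamma t := Gamma_pos_of_pos h0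
  have hG1 : 0 < Gamma (t + 1/2) := Gamma_pos_of_pos h1
  have hw := wendel t h0
  have e : 1 - 1/t = (t-1)/t := by field_simp
  rw [rr, e, div_le_div_iff₀ h0 (mul_pos (by linarith) (by positivity))]
  nlinarith [mul_le_mul_of_nonneg_left hw h0.le, sq_nonneg (Gamma t), hG0, hG1]

lemma rr_ge_one (s : ℝ) (hs : 1 ≤ s) : 1 ≤ rr s := by
  have hbd : ∀ n : ℕ, 1 - 1/(s + n) ≤ rr s := by
    intro n
    have hk : (0:ℝ) ≤ (n:ℝ) := Nat.cast_nonneg n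
    exact le_trans (rr_lower (s + n) (by linarith)) (rr_chain s hs n)
  have htend : Filter.Tendsto (fun n : ℕ => 1 - 1/(s + (n:ℝ))) Filter.atTop (nhds 1) := by
    have h1 : Filter.Tendsto (fun n : ℕ => s + (n:ℝ)) Filter.atTop Filter.atTop :=
      Filter.tendsto_atTop_add_const_left _ _ tendsto_natCast_atTop_atTop
    have h2 : Filter.Tendsto (fun n : ℕ => 1/(s + (n:ℝ))) Filter.atTop (nhds 0) := by
      rw [show (fun n : ℕ => 1/(s + (n:ℝ))) = (fun n : ℕ => s + (n:ℝ))⁻¹ from by funext n; simp]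
      exact h1.inv_tendsto_atTop
    simpa using (tendsto_const_nhds.sub h2)
  exact le_of_tendsto' htend hbd

-- Kershaw's inequality
lemma kershaw (s : ℝ) (hs : 1 ≤ s) : Real.sqrt (s - 1/4) * Gamma s ≤ Gamma (s + 1/2) := by
  have h0 : (0:ℝ) < s := by linarith
  have hG0 : 0 < Gamma s := Gamma_pos_of_pos h0
  have hG1 : 0 < Gamma (s + 1/2) := Gamma_pos_of_pos (by linarith)
  have h := rr_ge_one s hs
  rw [rr, one_le_div (mul_pos (by linarith) (by positivity))] at h
  have := Real.sqrt_le_sqrt h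
  rwa [Real.sqrt_mul (by linarith : (0:ℝ) ≤ s - 1/4), Real.sqrt_sq hG0.le,
    Real.sqrt_sq hG1.le] at this

-- the complex and real beta integrands agree on [0,1]
lemma beta_integrand_eq (a : ℝ) {t : ℝ} (h0 : 0 ≤ t) (h1 : t ≤ 1) :
    ((t : ℂ) ^ ((a:ℂ) - 1) * (1 - (t:ℂ)) ^ ((1:ℂ)/2 - 1))
      = ((t ^ (a-1) * (1-t) ^ ((1:ℝ)/2-1) : ℝ) : ℂ) := by
  rw [Complex.ofReal_mul, Complex.ofReal_cpow h0, Complex.ofReal_cpow (by linarith)]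
  push_cast
  ring_nf

lemma beta_integrable (a : ℝ) (ha : 0 < a) :
    IntervalIntegrable (fun t : ℝ => t ^ (a-1) * (1-t) ^ ((1:ℝ)/2-1))
      MeasureTheory.volume 0 1 := by
  have hc := Complex.betaIntegral_convergent (u := (a:ℂ)) (v := (1/2:ℂ))
    (by simpa using ha) (by norm_num)
  rw [intervalIntegrable_iff] at hc ⊢
  rw [Set.uIoc_of_le (by norm_num : (0:ℝ) ≤ 1)] at hc ⊢
  have := hc.re
  apply (MeasureTheory.IntegrableOn.congr_fun this ?_ measurableSet_Ioc)
  intro t ht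
  simp only [Function.comp_apply]
  rw [beta_integrand_eq a ht.1.le ht.2]
  simp

lemma beta_eval (a : ℝ) (ha : 0 < a) :
    (∫ t in (0:ℝ)..1, t ^ (a-1) * (1-t) ^ ((1:ℝ)/2-1)) * Gamma (a + 1/2)
      = Real.sqrt π * Gamma a := by
  have h := Complex.Gamma_mul_Gamma_eq_betaIntegral (s := (a:ℂ)) (t := ((1:ℂ)/2))
    (by simpa using ha) (by norm_num)
  have hbeta : Complex.betaIntegral (a:ℂ) ((1:ℂ)/2)
      = ((∫ t in (0:ℝ)..1, t ^ (a-1) * (1-t) ^ ((1:ℝ)/2-1) : ℝ) : ℂ) := by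
    rw [Complex.betaIntegral, ← intervalIntegral.integral_ofReal]
    apply intervalIntegral.integral_congr
    intro t ht
    rw [Set.uIcc_of_le (by norm_num : (0:ℝ) ≤ 1)] at ht
    exact beta_integrand_eq a ht.1 ht.2
  rw [hbeta] at h
  have hhalf : ((1:ℂ)/2) = (((1:ℝ)/2 : ℝ) : ℂ) := by norm_num
  have hsum : (a:ℂ) + (((1:ℝ)/2 : ℝ) : ℂ) = (((a + 1/2 : ℝ)) : ℂ) := by push_cast; ring
  rw [hhalf, hsum, Complex.Gamma_ofReal, Complex.Gamma_ofReal, Complex.Gamma_ofReal] at h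
  rw [← Complex.ofReal_mul, ← Complex.ofReal_mul] at h
  have h' := Complex.ofReal_inj.1 h
  rw [Real.Gamma_one_half_eq] at h'
  linarith [h']

theorem stmt5 (x : ℝ) (hx : x ∈ Set.Icc (0:ℝ) 1) (d : ℕ) (hd : 3 ≤ d) :
    (2 / (Real.sqrt π * ((d:ℝ) - 1))) * Real.sqrt ((d:ℝ)/2 - 3/4)
        * x ^ (((d:ℝ) - 1)/2)
      ≤ (∫ t in (0:ℝ)..x, t ^ (((d:ℝ) - 1)/2 - 1) * (1 - t) ^ ((1:ℝ)/2 - 1))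
        / (∫ t in (0:ℝ)..1, t ^ (((d:ℝ) - 1)/2 - 1) * (1 - t) ^ ((1:ℝ)/2 - 1)) := by
  obtain ⟨hx0, hx1⟩ := hx
  have hd3 : (3:ℝ) ≤ (d:ℝ) := by exact_mod_cast hd
  set a : ℝ := ((d:ℝ) - 1)/2 with ha_def
  have ha1 : 1 ≤ a := by rw [ha_def]; linarith
  have ha0 : 0 < a := by linarith
  have hG0 : 0 < Gamma a := Gamma_pos_of_pos ha0
  have hG1 : 0 < Gamma (a + 1/2) := Gamma_pos_of_pos (by linarith)
  have hsqpi : 0 < Real.sqrt π := Real.sqrt_pos.2 Real.pi_pos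
  -- denominator
  have hDval : (∫ t in (0:ℝ)..1, t ^ (a-1) * (1-t) ^ ((1:ℝ)/2-1))
      = Real.sqrt π * Gamma a / Gamma (a + 1/2) := by
    rw [eq_div_iff (ne_of_gt hG1)]
    exact beta_eval a ha0
  have hDpos : 0 < ∫ t in (0:ℝ)..1, t ^ (a-1) * (1-t) ^ ((1:ℝ)/2-1) := by
    rw [hDval]; positivity
  -- numerator lower bound
  have hIntBig : IntervalIntegrable (fun t : ℝ => t ^ (a-1) * (1-t) ^ ((1:ℝ)/2-1))
      MeasureTheory.volume 0 x :=
    (beta_integrable a ha0).mono_set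
      (by rw [Set.uIcc_of_le hx0, Set.uIcc_of_le (by norm_num : (0:ℝ) ≤ 1)]
          exact Set.Icc_subset_Icc le_rfl hx1)
  have hIntSmall : IntervalIntegrable (fun t : ℝ => t ^ (a-1))
      MeasureTheory.volume 0 x := intervalIntegral.intervalIntegrable_rpow' (by linarith)
  have hae : (fun t : ℝ => t ^ (a-1))
      ≤ᵐ[MeasureTheory.volume.restrict (Set.Icc (0:ℝ) x)]
      (fun t : ℝ => t ^ (a-1) * (1-t) ^ ((1:ℝ)/2-1)) := by
    have hne : ∀ᵐ (t:ℝ) ∂(MeasureTheory.volume.restrict (Set.Icc (0:ℝ) x)), t ≠ 1 := by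
      refine MeasureTheory.ae_iff.2 ?_
      have hset : {t : ℝ | ¬ t ≠ 1} = {1} := by ext u; simp
      rw [hset]
      refine le_antisymm (le_trans (MeasureTheory.Measure.restrict_apply_le _ _) ?_) (by simp)
      simp
    have hmem : ∀ᵐ (t:ℝ) ∂(MeasureTheory.volume.restrict (Set.Icc (0:ℝ) x)), t ∈ Set.Icc (0:ℝ) x :=
      MeasureTheory.ae_restrict_mem measurableSet_Icc
    filter_upwards [hne, hmem] with t hne1 hmem1
    have ht0 : 0 ≤ t := hmem1.1
    have ht1 : t < 1 := lt_of_le_of_ne (le_trans hmem1.2 hx1) hne1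
    have hone : 1 ≤ (1-t) ^ ((1:ℝ)/2-1) :=
      Real.one_le_rpow_of_pos_of_le_one_of_nonpos (by linarith) (by linarith) (by norm_num)
    calc t ^ (a-1) = t ^ (a-1) * 1 := by ring
      _ ≤ t ^ (a-1) * (1-t) ^ ((1:ℝ)/2-1) :=
          mul_le_mul_of_nonneg_left hone (Real.rpow_nonneg ht0 _)
  have hNlow : x ^ a / a ≤ ∫ t in (0:ℝ)..x, t ^ (a-1) * (1-t) ^ ((1:ℝ)/2-1) := by
    have hmono := intervalIntegral.integral_mono_ae_restrict hx0 hIntSmall hIntBig hae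
    have heval : (∫ t in (0:ℝ)..x, t ^ (a-1)) = x ^ a / a := by
      rw [integral_rpow (Or.inl (by linarith : (-1:ℝ) < a - 1)),
        show a - 1 + 1 = a by ring, Real.zero_rpow (ne_of_gt ha0)]
      ring
    rw [heval] at hmono
    exact hmono
  -- rewrite sqrt argument
  have hsqarg : (d:ℝ)/2 - 3/4 = a - 1/4 := by rw [ha_def]; ring
  have hker := kershaw a ha1
  have hxa : 0 ≤ x ^ a := Real.rpow_nonneg hx0 _
  have hsq : 0 ≤ Real.sqrt (a - 1/4) := Real.sqrt_nonneg _
  -- main chain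
  rw [hsqarg, hDval]
  have hd1 : (d:ℝ) - 1 = 2 * a := by rw [ha_def]; ring
  rw [hd1]
  rw [div_div_eq_mul_div]
  have e1 : 2/(Real.sqrt π*(2*a)) * Real.sqrt (a-1/4) * x^a
      = (Real.sqrt (a-1/4) * Gamma a) * x^a / (Real.sqrt π * a * Gamma a) := by
    rw [eq_div_iff (by positivity)]
    field_simp
  rw [e1]
  calc (Real.sqrt (a-1/4) * Gamma a) * x^a / (Real.sqrt π * a * Gamma a)
      ≤ Gamma (a+1/2) * x^a / (Real.sqrt π * a * Gamma a) := by
        gcongr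
    _ = (x^a/a) * Gamma (a+1/2) / (Real.sqrt π * Gamma a) := by
        field_simp
    _ ≤ (∫ t in (0:ℝ)..x, t ^ (a-1) * (1-t) ^ ((1:ℝ)/2-1)) * Gamma (a+1/2)
          / (Real.sqrt π * Gamma a) := by
        gcongr
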